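/- Let G = (V,E) be a graph and consider any alternative forcing process started from initial blue set S ⊆ V. Then for any subsets S, T ⊆ V and every ℓ ≥ 0, P(A(S,T,ℓ)) ≤ P(Ã(S,T,ℓ)), where A(S,T,ℓ) is the event that T is entirely blue after ℓ rounds of standard probabilistic zero forcing started at S, and Ã(S,T,ℓ) is the corresponding event for the alternative forcing process started at S. -/

import Mathlib

open Finset Filter Real
open scoped Classical

namespace PZF

variable {V : Type*} [Fintype V] [DecidableEq V]

/-- The closed degree of `u` into the set `B`, i.e. `|N[u] ∩ B|`. -/
noncomputable def closedDegIn (G : SimpleGraph V) (B : Finset V) (u : V) : ℕ :=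
  ((insert u (G.neighborSet u)) ∩ (B : Set V)).ncard

/-- The degree of `u` in `G`. -/
noncomputable def deg (G : SimpleGraph V) (u : V) : ℕ :=
  (G.neighborSet u).ncard

/-- The probability that the blue vertex `u` forces its white neighbour `v` in one round of
probabilistic zero forcing, when the current blue set is `B`: it equals `|N[u] ∩ B| / deg u`
when `u` is blue, `v` is a white neighbour of `u`, and `0` otherwise. -/
noncomputable def edgeForceProb (G : SimpleGraph V) (B : Finset V) (u v : V) : ℝ :=
  if G.Adj u v ∧ u ∈ B ∧ v ∉ B then (closedDegIn G B u : ℝ) / (deg G u : ℝ) else 0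

/-- Given per-ordered-pair forcing probabilities `q u v` (each attempt independent), the
probability that one round starting from the blue set `B` produces exactly the blue set `B'`. -/
noncomputable def stepOfQ (q : V → V → ℝ) (B B' : Finset V) : ℝ :=
  if B ⊆ B' then
    (∏ v ∈ B' \ B, (1 - ∏ u ∈ B, (1 - q u v))) * ∏ v ∈ B'ᶜ, ∏ u ∈ B, (1 - q u v)
  else 0

/-- The transition rule of standard probabilistic zero forcing, as a function of the history
(the list of blue sets so far; only the current blue set matters). -/
noncomputable def stdStep (G : SimpleGraph V) (hist : List (Finset V)) (B' : Finset V) : ℝ :=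
  stepOfQ (edgeForceProb G (hist.getLastD ∅)) (hist.getLastD ∅) B'

/-- Probability of a given future trajectory, given the history so far. -/
noncomputable def seqProbAux (step : List (Finset V) → Finset V → ℝ) :
    List (Finset V) → List (Finset V) → ℝ
  | _, [] => 1
  | hist, B :: rest => step hist B * seqProbAux step (hist ++ [B]) rest

/-- The probability that, running the process given by the transition rule `step` from the
initial blue set `S` for `ℓ` rounds, the resulting trajectory (including the initial set)
satisfies the predicate `E`. -/
noncomputable def trajEventProb (step : List (Finset V) → Finset V → ℝ) (S : Finset V)
    (ℓ : ℕ) (E : List (Finset V) → Prop) : ℝ :=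
  ∑ f : Fin ℓ → Finset V,
    if E (S :: List.ofFn f) then seqProbAux step [S] (List.ofFn f) else 0

/-- `P(A(S,T,ℓ))`: the probability that, starting probabilistic zero forcing from the blue
set `S`, after `ℓ` rounds every vertex of `T` is blue. -/
noncomputable def probForced (G : SimpleGraph V) (S T : Finset V) (ℓ : ℕ) : ℝ :=
  trajEventProb (stdStep G) S ℓ fun traj => T ⊆ traj.getLastD ∅

/-- `P(pt_pzf(G,S) ≤ ℓ)`: the probability that all vertices are blue after `ℓ` rounds. -/
noncomputable def probAllBlue (G : SimpleGraph V) (S : Finset V) (ℓ : ℕ) : ℝ :=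
  probForced G S Finset.univ ℓ

/-- The probability of a fixed graph `G` under the Erdős–Rényi measure `G(n,p)`. -/
noncomputable def erProb (n : ℕ) (p : ℝ) (G : SimpleGraph (Fin n)) : ℝ :=
  p ^ G.edgeSet.ncard * (1 - p) ^ (n.choose 2 - G.edgeSet.ncard)

/-- The probability that `G(n,p)` satisfies the property `E`. -/
noncomputable def graphProb (n : ℕ) (p : ℝ) (E : SimpleGraph (Fin n) → Prop) : ℝ :=
  ∑ G : SimpleGraph (Fin n), if E G then erProb n p G else 0

/-- `P(pt_pzf(G(n,p), v) ≤ ℓ)`: the joint probability (over the random graph and the forcing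
randomness) that probabilistic zero forcing started at `{v}` turns all of `G(n,p)` blue
within `ℓ` rounds. -/
noncomputable def prPZFwithin (n : ℕ) (p : ℝ) (v : Fin n) (ℓ : ℕ) : ℝ :=
  ∑ G : SimpleGraph (Fin n), erProb n p G * probAllBlue G {v} ℓ

/-- An alternative forcing process on `G` : an index set `I ⊆ ℕ` of rounds at which the
alternative rule is used, together with edge-forcing probabilities `q i hist u v` which may
depend on the whole history of blue sets `hist = [B₀, …, B_i]`.  In rounds `i ∉ I` the standard
probabilities are used; in rounds `i ∈ I` each boundary edge `e ∈ E(B_i, V \\ B_i)` is forced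
independently with a probability `Q̃_e` satisfying `Q_e ≤ Q̃_e ≤ 1`, and `Q̃_e = 0` on all
other pairs. -/
structure AltForcing (G : SimpleGraph V) where
  I : Set ℕ
  q : ℕ → List (Finset V) → V → V → ℝ
  q_std : ∀ i ∉ I, ∀ hist u v, q i hist u v = edgeForceProb G (hist.getLastD ∅) u v
  q_lower : ∀ i ∈ I, ∀ hist u v, edgeForceProb G (hist.getLastD ∅) u v ≤ q i hist u v
  q_upper : ∀ i ∈ I, ∀ hist u v, q i hist u v ≤ 1
  q_zero : ∀ i ∈ I, ∀ hist u v,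
    ¬(G.Adj u v ∧ u ∈ hist.getLastD ∅ ∧ v ∉ hist.getLastD ∅) → q i hist u v = 0

/-- The transition rule of an alternative forcing process: in round `i + 1` (the history
`hist = [B₀, …, B_i]` has length `i + 1`) each pair is forced independently with probability
`q i hist u v`, and forced white vertices turn blue. -/
noncomputable def altStep (G : SimpleGraph V) (A : AltForcing G)
    (hist : List (Finset V)) (B' : Finset V) : ℝ :=
  stepOfQ (A.q (hist.length - 1) hist) (hist.getLastD ∅) B'

end PZF

namespace PZF

variable {V : Type*} [Fintype V] [DecidableEq V]

noncomputable def pvert (q : V → V → ℝ) (B : Finset V) (v : V) : ℝ :=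
  1 - ∏ u ∈ B, (1 - q u v)

noncomputable def expBer (p : V → ℝ) (g : Finset V → ℝ) (s : Finset V) : ℝ :=
  ∑ W ∈ s.powerset, (∏ v ∈ W, p v) * ((∏ v ∈ s \ W, (1 - p v)) * g W)

lemma expBer_insert (p : V → ℝ) (g : Finset V → ℝ) {a : V} {s : Finset V} (ha : a ∉ s) :
    expBer p g (insert a s) =
      p a * expBer p (fun W => g (insert a W)) s + (1 - p a) * expBer p g s := by
  classical
  unfold expBer
  rw [Finset.sum_powerset_insert ha, Finset.mul_sum, Finset.mul_sum, add_comm]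
  congr 1
  · refine Finset.sum_congr rfl fun W hW => ?_
    rw [Finset.mem_powerset] at hW
    have haW : a ∉ W := fun h => ha (hW h)
    have h1 : insert a s \ insert a W = s \ W := by
      ext x
      simp only [Finset.mem_sdiff, Finset.mem_insert]
      constructor
      · rintro ⟨h | h, hx⟩
        · exact absurd (Or.inl h) hx
        · exact ⟨h, fun hw => hx (Or.inr hw)⟩
      · rintro ⟨h, hx⟩
        refine ⟨Or.inr h, ?_⟩
        rintro (rfl | hw)
        · exact ha h
        · exact hx hw
    simp only [h1, Finset.prod_insert haW]
    ring
  · refine Finset.sum_congr rfl fun W hW => ?_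
    rw [Finset.mem_powerset] at hW
    have haW : a ∉ W := fun h => ha (hW h)
    have h1 : insert a s \ W = insert a (s \ W) := by
      ext x
      simp only [Finset.mem_sdiff, Finset.mem_insert]
      constructor
      · rintro ⟨h | h, hx⟩
        · exact Or.inl h
        · exact Or.inr ⟨h, hx⟩
      · rintro (rfl | ⟨h, hx⟩)
        · exact ⟨Or.inl rfl, haW⟩
        · exact ⟨Or.inr h, hx⟩
    have h2 : a ∉ s \ W := fun h => ha (Finset.mem_sdiff.mp h).1
    simp only [h1, Finset.prod_insert h2]
    ring

lemma expBer_mono_g {p : V → ℝ} {g g' : Finset V → ℝ} {s : Finset V}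
    (hp : ∀ v ∈ s, 0 ≤ p v) (hp1 : ∀ v ∈ s, p v ≤ 1)
    (hg : ∀ W ⊆ s, g W ≤ g' W) : expBer p g s ≤ expBer p g' s := by
  refine Finset.sum_le_sum fun W hW => ?_
  rw [Finset.mem_powerset] at hW
  have h1 : 0 ≤ ∏ v ∈ W, p v := Finset.prod_nonneg fun v hv => hp v (hW hv)
  have h2 : 0 ≤ ∏ v ∈ s \ W, (1 - p v) := Finset.prod_nonneg fun v hv => by
    have := hp1 v (Finset.mem_sdiff.mp hv).1; linarith
  exact mul_le_mul_of_nonneg_left (mul_le_mul_of_nonneg_left (hg W hW) h2) h1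

lemma expBer_restrict_aux (p : V → ℝ) (h : Finset V → ℝ) (t : Finset V) (u : Finset V) :
    Disjoint u t →
      expBer p (fun X => h (X ∩ t)) (u ∪ t) = expBer p (fun X => h (X ∩ t)) t := by
  induction u using Finset.induction_on with
  | empty => simp
  | @insert a u ha ih =>
    intro hd
    have hat : a ∉ t := Finset.disjoint_left.mp hd (Finset.mem_insert_self a u)
    have hau : a ∉ u ∪ t := by
      simp only [Finset.mem_union, not_or]
      exact ⟨ha, hat⟩
    rw [Finset.insert_union, expBer_insert _ _ hau]
    have hfun : (fun W => (fun X => h (X ∩ t)) (insert a W)) = fun W => h (W ∩ t) := by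
      funext W
      simp only [Finset.insert_inter_of_notMem hat]
    rw [hfun, ih (hd.mono_left (Finset.subset_insert a u))]
    ring

lemma expBer_restrict (p : V → ℝ) (h : Finset V → ℝ) {t s : Finset V} (hts : t ⊆ s) :
    expBer p (fun X => h (X ∩ t)) s = expBer p h t := by
  have h1 := expBer_restrict_aux p h t (s \ t) Finset.sdiff_disjoint
  rw [Finset.sdiff_union_of_subset hts] at h1
  rw [h1]
  refine Finset.sum_congr rfl fun W hW => ?_
  rw [Finset.mem_powerset] at hW
  simp only [Finset.inter_eq_left.mpr hW]

lemma expBer_le (t : Finset V) :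
    ∀ (p r : V → ℝ) (g h : Finset V → ℝ),
      (∀ v ∈ t, 0 ≤ p v) → (∀ v ∈ t, p v ≤ r v) → (∀ v ∈ t, r v ≤ 1) →
      (∀ X Y : Finset V, X ⊆ Y → g X ≤ h Y) →
      expBer p g t ≤ expBer r h t := by
  induction t using Finset.induction_on with
  | empty =>
    intro p r g h _ _ _ hgh
    simpa [expBer] using hgh ∅ ∅ le_rfl
  | @insert a s ha ih =>
    intro p r g h hp0 hpr hr1 hgh
    have h0a : 0 ≤ p a := hp0 a (Finset.mem_insert_self _ _)
    have h1a : p a ≤ r a := hpr a (Finset.mem_insert_self _ _)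
    have h2a : r a ≤ 1 := hr1 a (Finset.mem_insert_self _ _)
    have hp0' : ∀ v ∈ s, 0 ≤ p v := fun v hv => hp0 v (Finset.mem_insert_of_mem hv)
    have hpr' : ∀ v ∈ s, p v ≤ r v := fun v hv => hpr v (Finset.mem_insert_of_mem hv)
    have hr1' : ∀ v ∈ s, r v ≤ 1 := fun v hv => hr1 v (Finset.mem_insert_of_mem hv)
    have I1 : expBer p (fun W => g (insert a W)) s ≤ expBer r (fun W => h (insert a W)) s :=
      ih p r _ _ hp0' hpr' hr1' fun X Y hXY => hgh _ _ (Finset.insert_subset_insert a hXY)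
    have I2 : expBer p g s ≤ expBer r (fun W => h (insert a W)) s :=
      ih p r _ _ hp0' hpr' hr1' fun X Y hXY => hgh _ _ (hXY.trans (Finset.subset_insert a Y))
    have I3 : expBer p g s ≤ expBer r h s := ih p r _ _ hp0' hpr' hr1' hgh
    rw [expBer_insert _ _ ha, expBer_insert _ _ ha]
    nlinarith [mul_le_mul_of_nonneg_left I1 h0a,
      mul_le_mul_of_nonneg_left I2 (by linarith : (0:ℝ) ≤ r a - p a),
      mul_le_mul_of_nonneg_left I3 (by linarith : (0:ℝ) ≤ 1 - r a)]

lemma sum_stepOfQ_mul (q : V → V → ℝ) (B : Finset V) (g : Finset V → ℝ) :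
    ∑ B' : Finset V, stepOfQ q B B' * g B' =
      expBer (pvert q B) (fun W => g (B ∪ W)) Bᶜ := by
  classical
  rw [← Finset.sum_filter_add_sum_filter_not Finset.univ (fun B' => B ⊆ B')
    (fun B' => stepOfQ q B B' * g B')]
  have hz : ∑ B' ∈ Finset.univ.filter (fun B' => ¬ B ⊆ B'), stepOfQ q B B' * g B' = 0 := by
    refine Finset.sum_eq_zero fun B' hB' => ?_
    rw [Finset.mem_filter] at hB'
    simp [stepOfQ, hB'.2]
  rw [hz, add_zero]
  unfold expBer
  refine Finset.sum_nbij' (fun B' => B' \ B) (fun W => B ∪ W) ?_ ?_ ?_ ?_ ?_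
  · intro B' hB'
    rw [Finset.mem_powerset]
    intro x hx
    rw [Finset.mem_compl]
    exact (Finset.mem_sdiff.mp hx).2
  · intro W hW
    rw [Finset.mem_filter]
    exact ⟨Finset.mem_univ _, Finset.subset_union_left⟩
  · intro B' hB'
    rw [Finset.mem_filter] at hB'
    exact Finset.union_sdiff_of_subset hB'.2
  · intro W hW
    rw [Finset.mem_powerset] at hW
    refine Finset.union_sdiff_cancel_left ?_
    rw [Finset.disjoint_left]
    intro x hxB hxW
    exact (Finset.mem_compl.mp (hW hxW)) hxB
  · intro B' hB'
    rw [Finset.mem_filter] at hB'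
    have hsub := hB'.2
    have hcomp : Bᶜ \ (B' \ B) = B'ᶜ := by
      ext x
      simp only [Finset.mem_sdiff, Finset.mem_compl]
      constructor
      · rintro ⟨hxB, hx⟩
        intro hxB'
        exact hx ⟨hxB', hxB⟩
      · intro hxB'
        exact ⟨fun hxB => hxB' (hsub hxB), fun h => hxB' h.1⟩
    have hg : B ∪ B' \ B = B' := Finset.union_sdiff_of_subset hsub
    have hpv : ∀ v, (1 : ℝ) - pvert q B v = ∏ u ∈ B, (1 - q u v) := by
      intro v; unfold pvert; ring
    have hpv2 : ∀ v, pvert q B v = 1 - ∏ u ∈ B, (1 - q u v) := fun v => rfl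
    simp only [stepOfQ, if_pos hsub, hcomp, hg, hpv, hpv2, sub_sub_cancel]
    ring

lemma edgeForceProb_nonneg (G : SimpleGraph V) (B : Finset V) (u v : V) :
    0 ≤ edgeForceProb G B u v := by
  unfold edgeForceProb
  split_ifs
  · positivity
  · exact le_rfl

lemma closedDegIn_le_deg {G : SimpleGraph V} {B : Finset V} {u v : V}
    (hadj : G.Adj u v) (hv : v ∉ B) : closedDegIn G B u ≤ deg G u := by
  unfold closedDegIn deg
  have hvu : v ≠ u := fun h => (h ▸ hadj).ne rfl
  have hvN : v ∈ G.neighborSet u := hadj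
  have hsub : (insert u (G.neighborSet u)) ∩ (B : Set V)
      ⊆ insert u ((G.neighborSet u) \ {v}) := by
    rintro x ⟨hx1, hx2⟩
    rcases hx1 with rfl | hx1
    · exact Set.mem_insert _ _
    · refine Set.mem_insert_of_mem _ ⟨hx1, ?_⟩
      simp only [Set.mem_singleton_iff]
      rintro rfl
      exact hv hx2
  have h1 := Set.ncard_le_ncard hsub (Set.toFinite _)
  have huN : u ∉ (G.neighborSet u) \ {v} := fun h => (G.irrefl h.1)
  have h2 : (insert u ((G.neighborSet u) \ {v})).ncard
      = ((G.neighborSet u) \ {v}).ncard + 1 := Set.ncard_insert_of_notMem huN (Set.toFinite _)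
  have h3 : ((G.neighborSet u) \ {v}).ncard = (G.neighborSet u).ncard - 1 :=
    Set.ncard_diff_singleton_of_mem hvN
  have h4 : 0 < (G.neighborSet u).ncard := (Set.ncard_pos (Set.toFinite _)).mpr ⟨v, hvN⟩
  omega

lemma deg_pos {G : SimpleGraph V} {u v : V} (hadj : G.Adj u v) : 0 < deg G u :=
  (Set.ncard_pos (Set.toFinite _)).mpr ⟨v, hadj⟩

lemma edgeForceProb_le_one (G : SimpleGraph V) (B : Finset V) (u v : V) :
    edgeForceProb G B u v ≤ 1 := by
  unfold edgeForceProb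
  split_ifs with h
  · obtain ⟨hadj, _, hvB⟩ := h
    have hd : (0 : ℝ) < (deg G u : ℝ) := by exact_mod_cast deg_pos hadj
    rw [div_le_one hd]
    exact_mod_cast closedDegIn_le_deg hadj hvB
  · exact zero_le_one

lemma edgeForceProb_mono {G : SimpleGraph V} {B C : Finset V} {u v : V}
    (hBC : B ⊆ C) (hv : v ∉ C) : edgeForceProb G B u v ≤ edgeForceProb G C u v := by
  unfold edgeForceProb
  split_ifs with h1 h2
  · have hd : (0 : ℝ) < (deg G u : ℝ) := by exact_mod_cast deg_pos h1.1
    rw [div_le_div_iff_of_pos_right hd]  -- may need rename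
    have : closedDegIn G B u ≤ closedDegIn G C u := by
      unfold closedDegIn
      exact Set.ncard_le_ncard (Set.inter_subset_inter_right _ (by exact_mod_cast hBC))
        (Set.toFinite _)
    exact_mod_cast this
  · exact absurd ⟨h1.1, hBC h1.2.1, hv⟩ h2
  · positivity
  · exact le_rfl

lemma altq_nonneg {G : SimpleGraph V} (A : AltForcing G) (i : ℕ) (hist : List (Finset V))
    (u v : V) : 0 ≤ A.q i hist u v := by
  by_cases hi : i ∈ A.I
  · exact (edgeForceProb_nonneg G _ u v).trans (A.q_lower i hi hist u v)
  · rw [A.q_std i hi]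
    exact edgeForceProb_nonneg G _ u v

lemma altq_le_one {G : SimpleGraph V} (A : AltForcing G) (i : ℕ) (hist : List (Finset V))
    (u v : V) : A.q i hist u v ≤ 1 := by
  by_cases hi : i ∈ A.I
  · exact A.q_upper i hi hist u v
  · rw [A.q_std i hi]
    exact edgeForceProb_le_one G _ u v

lemma altq_lower {G : SimpleGraph V} (A : AltForcing G) (i : ℕ) (hist : List (Finset V))
    (u v : V) : edgeForceProb G (hist.getLastD ∅) u v ≤ A.q i hist u v := by
  by_cases hi : i ∈ A.I
  · exact A.q_lower i hi hist u v
  · rw [A.q_std i hi]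

lemma pvert_le_one {q : V → V → ℝ} {B : Finset V} {v : V}
    (hq1 : ∀ u ∈ B, q u v ≤ 1) : pvert q B v ≤ 1 := by
  unfold pvert
  have : 0 ≤ ∏ u ∈ B, (1 - q u v) :=
    Finset.prod_nonneg fun u hu => by linarith [hq1 u hu]
  linarith

lemma pvert_nonneg {q : V → V → ℝ} {B : Finset V} {v : V}
    (hq0 : ∀ u ∈ B, 0 ≤ q u v) (hq1 : ∀ u ∈ B, q u v ≤ 1) : 0 ≤ pvert q B v := by
  unfold pvert
  have : ∏ u ∈ B, (1 - q u v) ≤ 1 :=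
    Finset.prod_le_one (fun u hu => by linarith [hq1 u hu]) (fun u hu => by linarith [hq0 u hu])
  linarith

lemma pvert_le_pvert {G : SimpleGraph V} {B C : Finset V} {q' : V → V → ℝ} {v : V}
    (hBC : B ⊆ C) (hv : v ∉ C)
    (hlow : ∀ u, edgeForceProb G C u v ≤ q' u v) (hup : ∀ u, q' u v ≤ 1) :
    pvert (edgeForceProb G B) B v ≤ pvert q' C v := by
  unfold pvert
  have h0 : ∀ u, 0 ≤ q' u v := fun u => (edgeForceProb_nonneg G C u v).trans (hlow u)
  have step1 : ∏ u ∈ C, (1 - q' u v) ≤ ∏ u ∈ B, (1 - q' u v) := by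
    rw [← Finset.prod_sdiff hBC]
    have hb : 0 ≤ ∏ u ∈ B, (1 - q' u v) :=
      Finset.prod_nonneg fun u hu => by linarith [hup u]
    have hc : ∏ u ∈ C \ B, (1 - q' u v) ≤ 1 :=
      Finset.prod_le_one (fun u hu => by linarith [hup u]) (fun u hu => by linarith [h0 u])
    exact mul_le_of_le_one_left hb hc
  have step2 : ∏ u ∈ B, (1 - q' u v) ≤ ∏ u ∈ B, (1 - edgeForceProb G B u v) := by
    refine Finset.prod_le_prod (fun u hu => by linarith [hup u]) fun u hu => ?_
    have := (edgeForceProb_mono hBC hv (u := u)).trans (hlow u)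
    linarith
  linarith

noncomputable def tailP (step : List (Finset V) → Finset V → ℝ) (T : Finset V) :
    ℕ → List (Finset V) → ℝ
  | 0, hist => if T ⊆ hist.getLastD ∅ then 1 else 0
  | k+1, hist => ∑ B' : Finset V, step hist B' * tailP step T k (hist ++ [B'])

lemma trajEventProb_eq_tailP (step : List (Finset V) → Finset V → ℝ) (T : Finset V) :
    ∀ (ℓ : ℕ) (hist : List (Finset V)),
      (∑ f : Fin ℓ → Finset V,
        if T ⊆ (hist ++ List.ofFn f).getLastD ∅ then seqProbAux step hist (List.ofFn f) else 0)
        = tailP step T ℓ hist := by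
  intro ℓ
  induction ℓ with
  | zero =>
    intro hist
    rw [Fintype.sum_unique]
    simp [tailP, seqProbAux]
  | succ k ih =>
    intro hist
    rw [show tailP step T (k+1) hist
      = ∑ B' : Finset V, step hist B' * tailP step T k (hist ++ [B']) from rfl]
    rw [← (Fin.consEquiv (fun _ : Fin (k+1) => Finset V)).sum_comp
      (fun f => if T ⊆ (hist ++ List.ofFn f).getLastD ∅
        then seqProbAux step hist (List.ofFn f) else 0)]
    rw [Fintype.sum_prod_type]
    refine Finset.sum_congr rfl fun B' _ => ?_
    rw [← ih (hist ++ [B']), Finset.mul_sum]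
    refine Finset.sum_congr rfl fun g _ => ?_
    have hofn : List.ofFn ((Fin.consEquiv fun _ : Fin (k+1) => Finset V) (B', g))
        = B' :: List.ofFn g := by
      simp [Fin.consEquiv, List.ofFn_succ]
    rw [hofn]
    have happ : hist ++ B' :: List.ofFn g = (hist ++ [B']) ++ List.ofFn g := by simp
    have hseq : seqProbAux step hist (B' :: List.ofFn g)
        = step hist B' * seqProbAux step (hist ++ [B']) (List.ofFn g) := rfl
    rw [happ, hseq, mul_ite, mul_zero]

lemma tailP_std_mono (G : SimpleGraph V) (T : Finset V) :
    ∀ (k : ℕ) (hist1 hist2 : List (Finset V)),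
      hist1.getLastD ∅ ⊆ hist2.getLastD ∅ →
      tailP (stdStep G) T k hist1 ≤ tailP (stdStep G) T k hist2 := by
  intro k
  induction k with
  | zero =>
    intro hist1 hist2 hsub
    simp only [tailP]
    split_ifs with hT1 hT2
    · exact le_rfl
    · exact absurd (hT1.trans hsub) hT2
    · exact zero_le_one
    · exact le_rfl
  | succ k ih =>
    intro hist1 hist2 hsub
    set B := hist1.getLastD ∅ with hB
    set C := hist2.getLastD ∅ with hC
    set p := pvert (edgeForceProb G B) B with hp
    set r := pvert (edgeForceProb G C) C with hr
    set M : Finset V → ℝ := fun Y => tailP (stdStep G) T k (hist1 ++ [C ∪ Y]) with hM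
    have lhs_eq : tailP (stdStep G) T (k+1) hist1
        = expBer p (fun W => tailP (stdStep G) T k (hist1 ++ [B ∪ W])) Bᶜ := by
      show (∑ B' : Finset V,
        stepOfQ (edgeForceProb G B) B B' * tailP (stdStep G) T k (hist1 ++ [B'])) = _
      exact sum_stepOfQ_mul _ _ _
    have rhs_eq : tailP (stdStep G) T (k+1) hist2
        = expBer r (fun W => tailP (stdStep G) T k (hist2 ++ [C ∪ W])) Cᶜ := by
      show (∑ B' : Finset V,
        stepOfQ (edgeForceProb G C) C B' * tailP (stdStep G) T k (hist2 ++ [B'])) = _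
      exact sum_stepOfQ_mul _ _ _
    rw [lhs_eq, rhs_eq]
    have hp0 : ∀ v, 0 ≤ p v := fun v =>
      pvert_nonneg (fun u _ => edgeForceProb_nonneg G B u v)
        (fun u _ => edgeForceProb_le_one G B u v)
    have hp1 : ∀ v, p v ≤ 1 := fun v =>
      pvert_le_one (fun u _ => edgeForceProb_le_one G B u v)
    have hr1 : ∀ v, r v ≤ 1 := fun v =>
      pvert_le_one (fun u _ => edgeForceProb_le_one G C u v)
    calc expBer p (fun W => tailP (stdStep G) T k (hist1 ++ [B ∪ W])) Bᶜ
        ≤ expBer p (fun W => M (W ∩ Cᶜ)) Bᶜ := by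
          refine expBer_mono_g (fun v _ => hp0 v) (fun v _ => hp1 v) fun W _ => ?_
          refine ih _ _ ?_
          rw [List.getLastD_concat, List.getLastD_concat]
          intro x hx
          rcases Finset.mem_union.mp hx with hx | hx
          · exact Finset.mem_union_left _ (hsub hx)
          · by_cases hxC : x ∈ C
            · exact Finset.mem_union_left _ hxC
            · exact Finset.mem_union_right _ (Finset.mem_inter.mpr ⟨hx, Finset.mem_compl.mpr hxC⟩)
      _ = expBer p M Cᶜ := expBer_restrict p M (Finset.compl_subset_compl.mpr hsub)
      _ ≤ expBer r (fun W => tailP (stdStep G) T k (hist2 ++ [C ∪ W])) Cᶜ := by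
          refine expBer_le Cᶜ p r M _ (fun v _ => hp0 v) (fun v hv => ?_) (fun v _ => hr1 v)
            (fun X Y hXY => ?_)
          · exact pvert_le_pvert hsub (Finset.mem_compl.mp hv)
              (fun u => le_rfl) (fun u => edgeForceProb_le_one G C u v)
          · refine ih _ _ ?_
            rw [List.getLastD_concat, List.getLastD_concat]
            exact Finset.union_subset_union_right hXY

lemma tailP_le (G : SimpleGraph V) (A : AltForcing G) (T : Finset V) :
    ∀ (k : ℕ) (hist1 hist2 : List (Finset V)),
      hist1.getLastD ∅ ⊆ hist2.getLastD ∅ →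
      tailP (stdStep G) T k hist1 ≤ tailP (altStep G A) T k hist2 := by
  intro k
  induction k with
  | zero =>
    intro hist1 hist2 hsub
    simp only [tailP]
    split_ifs with hT1 hT2
    · exact le_rfl
    · exact absurd (hT1.trans hsub) hT2
    · exact zero_le_one
    · exact le_rfl
  | succ k ih =>
    intro hist1 hist2 hsub
    set B := hist1.getLastD ∅ with hB
    set C := hist2.getLastD ∅ with hC
    set q' : V → V → ℝ := A.q (hist2.length - 1) hist2 with hq'
    set p := pvert (edgeForceProb G B) B with hp
    set r := pvert q' C with hr
    set M : Finset V → ℝ := fun Y => tailP (stdStep G) T k (hist1 ++ [C ∪ Y]) with hM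
    have lhs_eq : tailP (stdStep G) T (k+1) hist1
        = expBer p (fun W => tailP (stdStep G) T k (hist1 ++ [B ∪ W])) Bᶜ := by
      show (∑ B' : Finset V,
        stepOfQ (edgeForceProb G B) B B' * tailP (stdStep G) T k (hist1 ++ [B'])) = _
      exact sum_stepOfQ_mul _ _ _
    have rhs_eq : tailP (altStep G A) T (k+1) hist2
        = expBer r (fun W => tailP (altStep G A) T k (hist2 ++ [C ∪ W])) Cᶜ := by
      show (∑ B' : Finset V,
        stepOfQ q' C B' * tailP (altStep G A) T k (hist2 ++ [B'])) = _
      exact sum_stepOfQ_mul _ _ _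
    rw [lhs_eq, rhs_eq]
    have hp0 : ∀ v, 0 ≤ p v := fun v =>
      pvert_nonneg (fun u _ => edgeForceProb_nonneg G B u v)
        (fun u _ => edgeForceProb_le_one G B u v)
    have hp1 : ∀ v, p v ≤ 1 := fun v =>
      pvert_le_one (fun u _ => edgeForceProb_le_one G B u v)
    have hr1 : ∀ v, r v ≤ 1 := fun v =>
      pvert_le_one (fun u _ => altq_le_one A _ hist2 u v)
    calc expBer p (fun W => tailP (stdStep G) T k (hist1 ++ [B ∪ W])) Bᶜ
        ≤ expBer p (fun W => M (W ∩ Cᶜ)) Bᶜ := by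
          refine expBer_mono_g (fun v _ => hp0 v) (fun v _ => hp1 v) fun W _ => ?_
          refine tailP_std_mono G T k _ _ ?_
          rw [List.getLastD_concat, List.getLastD_concat]
          intro x hx
          rcases Finset.mem_union.mp hx with hx | hx
          · exact Finset.mem_union_left _ (hsub hx)
          · by_cases hxC : x ∈ C
            · exact Finset.mem_union_left _ hxC
            · exact Finset.mem_union_right _ (Finset.mem_inter.mpr ⟨hx, Finset.mem_compl.mpr hxC⟩)
      _ = expBer p M Cᶜ := expBer_restrict p M (Finset.compl_subset_compl.mpr hsub)
      _ ≤ expBer r (fun W => tailP (altStep G A) T k (hist2 ++ [C ∪ W])) Cᶜ := by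
          refine expBer_le Cᶜ p r M _ (fun v _ => hp0 v) (fun v hv => ?_) (fun v _ => hr1 v)
            (fun X Y hXY => ?_)
          · exact pvert_le_pvert hsub (Finset.mem_compl.mp hv)
              (fun u => altq_lower A _ hist2 u v) (fun u => altq_le_one A _ hist2 u v)
          · refine ih _ _ ?_
            rw [List.getLastD_concat, List.getLastD_concat]
            exact Finset.union_subset_union_right hXY

end PZF



/-- For any alternative forcing process on `G` and any `S, T ⊆ V` and
`ℓ ≥ 0`, `P(A(S, T, ℓ)) ≤ P(Ã(S, T, ℓ))`: the probability that `T` is entirely blue after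
`ℓ` rounds of the standard process started at `S` is at most the corresponding probability
for the alternative forcing process started at `S`. -/
theorem alt_forcing_coupling {V : Type*} [Fintype V] [DecidableEq V] (G : SimpleGraph V)
    (A : PZF.AltForcing G) (S T : Finset V) (ℓ : ℕ) :
    PZF.trajEventProb (PZF.stdStep G) S ℓ (fun traj => T ⊆ traj.getLastD ∅) ≤
      PZF.trajEventProb (PZF.altStep G A) S ℓ (fun traj => T ⊆ traj.getLastD ∅) := by
  have e1 : ∀ step : List (Finset V) → Finset V → ℝ,
      PZF.trajEventProb step S ℓ (fun traj => T ⊆ traj.getLastD ∅)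
        = ∑ f : Fin ℓ → Finset V,
            if T ⊆ ([S] ++ List.ofFn f).getLastD ∅ then PZF.seqProbAux step [S] (List.ofFn f)
            else 0 := by
    intro step
    unfold PZF.trajEventProb
    refine Finset.sum_congr rfl fun f _ => ?_
    congr 1
  have hmain := PZF.tailP_le G A T ℓ [S] [S] (by rfl)
  calc PZF.trajEventProb (PZF.stdStep G) S ℓ (fun traj => T ⊆ traj.getLastD ∅)
      = PZF.tailP (PZF.stdStep G) T ℓ [S] := by
        rw [e1, PZF.trajEventProb_eq_tailP (PZF.stdStep G) T ℓ [S]]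
    _ ≤ PZF.tailP (PZF.altStep G A) T ℓ [S] := hmain
    _ = PZF.trajEventProb (PZF.altStep G A) S ℓ (fun traj => T ⊆ traj.getLastD ∅) := by
        rw [e1, PZF.trajEventProb_eq_tailP (PZF.altStep G A) T ℓ [S]]
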